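/- Let m > -1, b > 1, and suppose (−1 < m ≤ 0 and M > −m(b+1)) or (m > 0 and M ≥ −2m). If f is a concave solution of f''' + ((m+1)/2)·f·f'' + m·(1−(f')²) + M·(1−f') = 0 with f(0)=a, f'(0)=b, f'(∞)=1, and f(t) − (t + l) → 0 as t → ∞ for some real l, then a < l < √(a² + 4(b−1)/(m+1)) and for all t ≥ 0, t + a ≤ f(t) ≤ t + l. -/

import Mathlib

open Filter

theorem stmt_18 (m M a b l : ℝ) (hm : -1 < m) (hb : 1 < b)
    (hcase : (-1 < m ∧ m ≤ 0 ∧ -m * (b + 1) < M) ∨ (0 < m ∧ -2 * m ≤ M))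
    (f : ℝ → ℝ) (hf : ContDiff ℝ 3 f)
    (hode : ∀ t : ℝ, 0 ≤ t →
      deriv (deriv (deriv f)) t + (m + 1) / 2 * f t * deriv (deriv f) t
        + m * (1 - (deriv f t) ^ 2) + M * (1 - deriv f t) = 0)
    (hconc : ∀ t : ℝ, 0 ≤ t → deriv (deriv f) t < 0)
    (h0 : f 0 = a) (h1 : deriv f 0 = b)
    (hlim : Tendsto (deriv f) atTop (nhds 1))
    (hl : Tendsto (fun t => f t - (t + l)) atTop (nhds 0)) :
    a < l ∧ l < Real.sqrt (a ^ 2 + 4 * (b - 1) / (m + 1)) ∧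
    ∀ t : ℝ, 0 ≤ t → t + a ≤ f t ∧ f t ≤ t + l := by
  have hm1 : (0:ℝ) < m + 1 := by linarith
  have hc : (0:ℝ) < (m+1)/2 := by linarith
  -- smoothness facts
  have hdf : Differentiable ℝ f := hf.differentiable (by norm_num)
  have hcd1 : ContDiff ℝ 2 (deriv f) :=
    (contDiff_succ_iff_deriv.mp (show ContDiff ℝ (2+1) f by norm_num; exact hf)).2.2
  have hdf1 : Differentiable ℝ (deriv f) := hcd1.differentiable (by norm_num)
  have hcd2 : ContDiff ℝ 1 (deriv (deriv f)) :=
    (contDiff_succ_iff_deriv.mp (show ContDiff ℝ (1+1) (deriv f) by norm_num; exact hcd1)).2.2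
  have hdf2 : Differentiable ℝ (deriv (deriv f)) := hcd2.differentiable (by norm_num)
  have Hf : ∀ t, HasDerivAt f (deriv f t) t := fun t => (hdf t).hasDerivAt
  have Hf1 : ∀ t, HasDerivAt (deriv f) (deriv (deriv f) t) t := fun t => (hdf1 t).hasDerivAt
  have Hf2 : ∀ t, HasDerivAt (deriv (deriv f)) (deriv (deriv (deriv f)) t) t :=
    fun t => (hdf2 t).hasDerivAt
  -- deriv f strictly decreasing on [0,∞)
  have hanti : StrictAntiOn (deriv f) (Set.Ici 0) := by
    apply strictAntiOn_of_deriv_neg (convex_Ici 0) hcd1.continuous.continuousOn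
    intro t ht
    rw [interior_Ici] at ht
    exact hconc t ht.le
  have hge : ∀ t : ℝ, 0 ≤ t → 1 ≤ deriv f t := by
    intro t ht
    refine le_of_tendsto hlim ?_
    filter_upwards [eventually_ge_atTop t] with s hs
    rcases eq_or_lt_of_le hs with rfl | hlt
    · exact le_refl _
    · exact (hanti ht (le_trans ht hs) hlt).le
  have hf1gt : ∀ t : ℝ, 0 ≤ t → 1 < deriv f t := by
    intro t ht
    have h2 := hanti ht (show t + 1 ∈ Set.Ici (0:ℝ) by simp; linarith) (by linarith)
    have h3 := hge (t+1) (by linarith)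
    linarith
  have hf1le : ∀ t : ℝ, 0 ≤ t → deriv f t ≤ b := by
    intro t ht
    rcases eq_or_lt_of_le ht with rfl | hlt
    · exact h1.le
    · have := hanti (le_refl (0:ℝ)) ht hlt
      rw [h1] at this; exact this.le
  have hB : ∀ t : ℝ, 0 ≤ t → 0 < m * (1 + deriv f t) + M := by
    intro t ht
    rcases hcase with ⟨_, hm0, hM⟩ | ⟨hmpos, hM⟩
    · have h2 := hf1le t ht
      nlinarith [mul_nonneg (neg_nonneg.mpr hm0) (sub_nonneg.mpr h2)]
    · have h2 := hf1gt t ht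
      nlinarith
  -- the energy-derivative function E
  set E : ℝ → ℝ := fun t => deriv (deriv f) t + (m+1)/2 * ((f t - t) * (deriv f t - 1)) with hE
  have Hsub : ∀ t : ℝ, HasDerivAt (fun s => f s - s) (deriv f t - 1) t :=
    fun t => (Hf t).sub (hasDerivAt_id t)
  have HE : ∀ t : ℝ, HasDerivAt E (deriv (deriv (deriv f)) t
      + (m+1)/2 * ((deriv f t - 1) * (deriv f t - 1) + (f t - t) * deriv (deriv f) t)) t := by
    intro t
    have h2 : HasDerivAt (fun s => deriv f s - 1) (deriv (deriv f) t) t := (Hf1 t).sub_const 1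
    have h3 := ((Hsub t).mul h2).const_mul ((m+1)/2)
    exact (Hf2 t).add h3
  have hcontE : Continuous E := by
    apply hcd2.continuous.add
    exact (continuous_const.mul ((hdf.continuous.sub continuous_id).mul
      (hcd1.continuous.sub continuous_const)))
  have hEdef : ∀ t : ℝ, E t = deriv (deriv f) t + (m+1)/2 * ((f t - t) * (deriv f t - 1)) :=
    fun t => rfl
  clear_value E
  have hEmono : StrictMonoOn E (Set.Ici 0) := by
    apply strictMonoOn_of_deriv_pos (convex_Ici 0) hcontE.continuousOn
    intro t ht
    rw [interior_Ici] at ht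
    have ht0 : (0:ℝ) ≤ t := ht.le
    rw [(HE t).deriv]
    have hode' := hode t ht0
    have hg1 := hf1gt t ht0
    have hg2 := hconc t ht0
    have hg3 := hB t ht0
    nlinarith [mul_pos (sub_pos.mpr hg1) hg3,
      mul_pos hc (mul_pos (sub_pos.mpr hg1) (sub_pos.mpr hg1)),
      mul_nonneg (mul_nonneg hc.le ht0) (neg_nonneg.mpr hg2.le)]
  -- the perturbation term tends to 0
  have hft : Tendsto (fun t => f t - t) atTop (nhds l) := by
    have := hl.add_const l
    simp only [zero_add] at this
    convert this using 2 with t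
    ring
  have hf1sub : Tendsto (fun t => deriv f t - 1) atTop (nhds 0) := by
    have := hlim.sub_const 1
    simpa using this
  have hφ0 : Tendsto (fun t => (m+1)/2 * ((f t - t) * (deriv f t - 1))) atTop (nhds 0) := by
    have := (hft.mul hf1sub).const_mul ((m+1)/2)
    simpa using this
  -- E ≤ 0 on [0,∞)
  have hEle : ∀ t : ℝ, 0 ≤ t → E t ≤ 0 := by
    intro t ht
    by_contra hpos
    push_neg at hpos
    have hev : ∀ᶠ s in atTop, (m+1)/2 * ((f s - s) * (deriv f s - 1)) < E t :=
      hφ0.eventually_lt_const hpos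
    obtain ⟨s, hs1, hs2⟩ := (hev.and (eventually_ge_atTop t)).exists
    have hs0 : (0:ℝ) ≤ s := le_trans ht hs2
    have hEs : E t ≤ E s := by
      rcases eq_or_lt_of_le hs2 with rfl | hlt
      · exact le_refl _
      · exact (hEmono ht hs0 hlt).le
    have hf2s := hconc s hs0
    have hEs2 := hEdef s
    linarith
  have hElt : ∀ t : ℝ, 0 ≤ t → E t < 0 := by
    intro t ht
    have h2 := hEmono (show t ∈ Set.Ici (0:ℝ) from ht)
      (show t + 1 ∈ Set.Ici (0:ℝ) by simp; linarith) (by linarith)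
    have h3 := hEle (t+1) (by linarith)
    linarith
  -- the energy function G
  set G : ℝ → ℝ := fun t => deriv f t + (m+1)/4 * (f t - t)^2 with hG
  have HG : ∀ t : ℝ, HasDerivAt G (E t) t := by
    intro t
    have h2 := ((Hsub t).pow 2).const_mul ((m+1)/4)
    have h3 := (Hf1 t).add h2
    have h4 : HasDerivAt G _ t := h3
    convert h4 using 1
    simp only [hE]
    push_cast
    ring
  have hcontG : Continuous G := by
    apply hcd1.continuous.add
    exact continuous_const.mul (((hdf.continuous.sub continuous_id).pow 2))
  have hGlim : Tendsto G atTop (nhds (1 + (m+1)/4 * l^2)) := by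
    have h2 : Tendsto (fun t => (m+1)/4 * (f t - t)^2) atTop (nhds ((m+1)/4 * l^2)) :=
      ((hft.pow 2)).const_mul _
    exact hlim.add h2
  have hG0 : G 0 = b + (m+1)/4 * a^2 := by
    simp only [hG, h0, h1]
    ring
  clear_value G
  have hGanti : StrictAntiOn G (Set.Ici 0) := by
    apply strictAntiOn_of_deriv_neg (convex_Ici 0) hcontG.continuousOn
    intro t ht
    rw [interior_Ici] at ht
    rw [(HG t).deriv]
    exact hElt t ht.le
  have hkey : 1 + (m+1)/4 * l^2 < b + (m+1)/4 * a^2 := by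
    have hle1 : 1 + (m+1)/4 * l^2 ≤ G 1 := by
      refine le_of_tendsto hGlim ?_
      filter_upwards [eventually_ge_atTop (1:ℝ)] with s hs
      rcases eq_or_lt_of_le hs with rfl | hlt
      · exact le_refl _
      · exact (hGanti (by norm_num) (show s ∈ Set.Ici (0:ℝ) by simp; linarith) hlt).le
    have hlt2 : G 1 < G 0 := hGanti Set.self_mem_Ici (by norm_num) (by norm_num)
    linarith
  have hlsq : l^2 < a^2 + 4*(b-1)/(m+1) := by
    have h4 : (l^2 - a^2) * (m+1) < 4*(b-1) := by nlinarith
    have h5 : l^2 - a^2 < 4*(b-1)/(m+1) := (lt_div_iff₀ hm1).mpr h4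
    linarith
  -- monotone shifted functions
  have hwmono : ∀ k : ℝ, StrictMonoOn (fun t => f t - (t + k)) (Set.Ici 0) := by
    intro k
    have hck : Continuous (fun t : ℝ => f t - (t + k)) := by
      exact hdf.continuous.sub (by continuity)
    apply strictMonoOn_of_deriv_pos (convex_Ici 0) hck.continuousOn
    intro t ht
    rw [interior_Ici] at ht
    have hd : HasDerivAt (fun t => f t - (t + k)) (deriv f t - 1) t := by
      exact (Hf t).sub ((hasDerivAt_id t).add_const k)
    rw [hd.deriv]
    have := hf1gt t ht.le
    linarith
  have hupper : ∀ t : ℝ, 0 ≤ t → f t - (t + l) ≤ 0 := by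
    intro t ht
    refine ge_of_tendsto hl ?_
    filter_upwards [eventually_ge_atTop t] with s hs
    rcases eq_or_lt_of_le hs with rfl | hlt
    · exact le_refl _
    · exact (hwmono l ht (le_trans ht hs) hlt).le
  have hal : a < l := by
    have h2 := hwmono l (le_refl (0:ℝ)) (show (1:ℝ) ∈ Set.Ici (0:ℝ) by norm_num) (by norm_num)
    have h3 := hupper 1 (by norm_num)
    simp only [h0] at h2
    linarith
  refine ⟨hal, ?_, ?_⟩
  · rcases le_or_gt 0 l with hl0 | hl0
    · calc l = Real.sqrt (l^2) := (Real.sqrt_sq hl0).symm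
        _ < _ := Real.sqrt_lt_sqrt (sq_nonneg l) (by linarith [hlsq])
    · exact lt_of_lt_of_le hl0 (Real.sqrt_nonneg _)
  · intro t ht
    constructor
    · rcases eq_or_lt_of_le ht with rfl | hlt
      · simp [h0]
      · have h2 := hwmono a (le_refl (0:ℝ)) (show t ∈ Set.Ici (0:ℝ) from ht) hlt
        simp only [h0] at h2
        linarith
    · have := hupper t ht
      linarith
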